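/- Let m ≥ 1 and 0 ≤ k ≤ m, let φ be a Schwartz function on ℝ whose Fourier transform φ̂ is supported in [−1/100, 1/100], and let ϕ ∈ C^∞(ℝ) be supported in [−1/10, 1/10] and equal to 1 on [−1/20, 1/20]. Fix an integer N ≥ 1, signs e_j ∈ {−1, +1} for −N ≤ j ≤ N, and complex numbers d_l for −mN ≤ l ≤ mN. Define f(x) = N^{−1} φ(x/N) Σ_{j=−N}^N e_j e^{2πi j x/N}, g(x) = N^{−1} φ(x/N) Σ_{j=−N}^N e^{2πi j x/N}, and σ(ξ₁,…,ξ_m) = Σ_{j₁=−N}^N ⋯ Σ_{j_m=−N}^N d_{j₁+⋯+j_m} e_{j₁}⋯e_{j_k} ∏_{i=1}^m ϕ(Nξ_i − j_i). Then for every x ∈ ℝ: T_σ(f, …, f, g, …, g)(x), with f in the first k slots and g in the remaining m − k slots, equals N^{−m} φ(x/N)^m Σ_{j₁=−N}^N ⋯ Σ_{j_m=−N}^N d_{j₁+⋯+j_m} e^{2πi (j₁+⋯+j_m) x/N}; in particular this value is independent of k. -/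

import Mathlib

open MeasureTheory

noncomputable section

/-- The one-dimensional Fourier transform `f̂(ξ) = ∫ f(y) e^{-2πi yξ} dy`. -/
def ft1 (f : ℝ → ℂ) (ξ : ℝ) : ℂ :=
  ∫ y : ℝ, f y * Complex.exp (-(2 * Real.pi * Complex.I) * ((y * ξ : ℝ) : ℂ))

/-- The `m`-linear multiplier operator on `ℝ`:
`T_σ(f₁,…,f_m)(x) = ∫ σ(ξ₁,…,ξ_m) f̂₁(ξ₁)⋯f̂_m(ξ_m) e^{2πi x(ξ₁+⋯+ξ_m)} dξ`. -/
def TmulR {m : ℕ} (σ : (Fin m → ℝ) → ℂ) (f : Fin m → (ℝ → ℂ)) (x : ℝ) : ℂ :=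
  ∫ ξ : Fin m → ℝ, σ ξ * (∏ i, ft1 (f i) (ξ i)) *
    Complex.exp ((2 * Real.pi * Complex.I) * (((∑ i, ξ i) * x : ℝ) : ℂ))

lemma ft1_eq (f : ℝ → ℂ) (ξ : ℝ) : ft1 f ξ = FourierTransform.fourier f ξ := by
  rw [Real.fourier_real_eq_integral_exp_smul, ft1]
  congr 1; ext y
  rw [smul_eq_mul]
  push_cast
  ring_nf

lemma integrable_mul_exp {f : ℝ → ℂ} (hf : Integrable f) (a : ℝ) {g : ℝ → ℝ}
    (hg : Continuous g) :
    Integrable fun y => f y * Complex.exp (((a : ℂ) * Complex.I) * ((g y : ℝ) : ℂ)) := by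
  have h : Integrable fun y =>
      Complex.exp (((a : ℂ) * Complex.I) * ((g y : ℝ) : ℂ)) * f y := by
    refine hf.bdd_mul (c := 1) ?_ ?_
    · exact (Complex.continuous_exp.comp (by continuity)).aestronglyMeasurable
    · refine Filter.Eventually.of_forall fun x => ?_
      simp [Complex.norm_exp, Complex.mul_re]
  exact h.congr (Filter.Eventually.of_forall fun y => mul_comm _ _)

lemma integrable_mul_exp' {f : ℝ → ℂ} (hf : Integrable f) {g : ℝ → ℝ}
    (hg : Continuous g) :
    Integrable fun y => f y * Complex.exp ((2 * Real.pi * Complex.I) * ((g y : ℝ) : ℂ)) := by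
  have h := integrable_mul_exp hf (2 * Real.pi) hg
  have hc : ((2 * Real.pi : ℝ) : ℂ) * Complex.I = 2 * Real.pi * Complex.I := by
    push_cast; ring
  simpa only [hc] using h

lemma integrable_mul_exp_neg {f : ℝ → ℂ} (hf : Integrable f) {g : ℝ → ℝ}
    (hg : Continuous g) :
    Integrable fun y => f y * Complex.exp (-(2 * Real.pi * Complex.I) * ((g y : ℝ) : ℂ)) := by
  have h := integrable_mul_exp hf (-(2 * Real.pi)) hg
  have hc : ((-(2 * Real.pi) : ℝ) : ℂ) * Complex.I = -(2 * Real.pi * Complex.I) := by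
    push_cast; ring
  simpa only [hc] using h

lemma ft1_slot (φ : SchwartzMap ℝ ℂ) (N : ℕ) (hN : 1 ≤ N) (c : ℤ → ℂ) (S : Finset ℤ) (ξ : ℝ) :
    ft1 (fun y => ((N : ℝ) : ℂ)⁻¹ * φ (y / N) * ∑ j ∈ S,
      c j * Complex.exp ((2 * Real.pi * Complex.I) * (((j : ℝ) * y / N : ℝ) : ℂ))) ξ
    = ∑ j ∈ S, c j * ft1 ⇑φ ((N : ℝ) * ξ - (j : ℝ)) := by
  have hN0 : (N : ℝ) ≠ 0 := by positivity
  set g : ℤ → ℝ → ℂ := fun j u => φ u *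
    Complex.exp (-(2 * Real.pi * Complex.I) * ((u * ((N : ℝ) * ξ - (j : ℝ)) : ℝ) : ℂ)) with hg
  have hgint : ∀ j : ℤ, Integrable (g j) := fun j =>
    integrable_mul_exp_neg (φ.integrable (μ := volume))
      (g := fun u => u * ((N : ℝ) * ξ - (j : ℝ))) (continuous_id.mul continuous_const)
  have hint : ∀ j : ℤ, Integrable (fun y : ℝ =>
      ((N : ℝ) : ℂ)⁻¹ * c j * g j (y / N)) := fun j =>
    (((hgint j).comp_div hN0).const_mul _)
  calc ft1 _ ξ = ∫ y : ℝ, ∑ j ∈ S, ((N : ℝ) : ℂ)⁻¹ * c j * g j (y / N) := by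
        rw [ft1]
        congr 1; ext y
        rw [Finset.mul_sum, Finset.sum_mul]
        refine Finset.sum_congr rfl fun j _ => ?_
        have hexp : Complex.exp ((2 * Real.pi * Complex.I) * (((j : ℝ) * y / N : ℝ) : ℂ)) *
            Complex.exp (-(2 * Real.pi * Complex.I) * ((y * ξ : ℝ) : ℂ)) =
            Complex.exp (-(2 * Real.pi * Complex.I) *
              (((y / N) * ((N : ℝ) * ξ - (j : ℝ)) : ℝ) : ℂ)) := by
          rw [← Complex.exp_add]; congr 1
          have hNC : (N : ℂ) ≠ 0 := Nat.cast_ne_zero.mpr (by omega)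
          push_cast; field_simp; ring
        calc ((N : ℝ) : ℂ)⁻¹ * φ (y / N) *
              (c j * Complex.exp ((2 * Real.pi * Complex.I) * (((j : ℝ) * y / N : ℝ) : ℂ))) *
              Complex.exp (-(2 * Real.pi * Complex.I) * ((y * ξ : ℝ) : ℂ))
            = ((N : ℝ) : ℂ)⁻¹ * c j * (φ (y / N) *
              (Complex.exp ((2 * Real.pi * Complex.I) * (((j : ℝ) * y / N : ℝ) : ℂ)) *
               Complex.exp (-(2 * Real.pi * Complex.I) * ((y * ξ : ℝ) : ℂ)))) := by ring
          _ = ((N : ℝ) : ℂ)⁻¹ * c j * g j (y / N) := by rw [hexp, hg]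
    _ = ∑ j ∈ S, ∫ y : ℝ, ((N : ℝ) : ℂ)⁻¹ * c j * g j (y / N) :=
        integral_finset_sum S fun j _ => hint j
    _ = ∑ j ∈ S, c j * ft1 ⇑φ ((N : ℝ) * ξ - (j : ℝ)) := by
        refine Finset.sum_congr rfl fun j _ => ?_
        rw [MeasureTheory.integral_const_mul, Measure.integral_comp_div (g j) N]
        have h1 : ft1 ⇑φ ((N : ℝ) * ξ - (j : ℝ)) = ∫ u, g j u := rfl
        rw [h1, abs_of_nonneg (by positivity : (0:ℝ) ≤ (N:ℝ)), Complex.real_smul]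
        have hNC : ((N:ℕ) : ℂ) ≠ 0 := Nat.cast_ne_zero.mpr (by omega)
        have hNC' : ((N : ℝ) : ℂ) ≠ 0 := by exact_mod_cast hN0
        field_simp

-- Fourier inversion for Schwartz functions, in `ft1` form.
lemma ft1_integrable (φ : SchwartzMap ℝ ℂ) : Integrable (ft1 ⇑φ) := by
  have h := (SchwartzMap.fourierTransformCLM ℝ φ).integrable (μ := volume)
  rw [SchwartzMap.fourierTransformCLM_apply, SchwartzMap.fourier_coe] at h
  exact h.congr (Filter.Eventually.of_forall fun ξ => (ft1_eq ⇑φ ξ).symm)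

lemma ft1_inversion (φ : SchwartzMap ℝ ℂ) (w : ℝ) :
    ∫ v : ℝ, ft1 ⇑φ v * Complex.exp ((2 * Real.pi * Complex.I) * ((v * w : ℝ) : ℂ)) = φ w := by
  have hΦ : Integrable (FourierTransform.fourier ⇑φ) := by
    have h := (SchwartzMap.fourierTransformCLM ℝ φ).integrable (μ := volume)
    rwa [SchwartzMap.fourierTransformCLM_apply, SchwartzMap.fourier_coe] at h
  have h := Continuous.fourierInv_fourier_eq φ.continuous (φ.integrable) hΦ
  have h2 : FourierTransformInv.fourierInv (FourierTransform.fourier ⇑φ) w = φ w := by rw [h]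
  simp_rw [fun v => ft1_eq ⇑φ v]
  rw [← h2, Real.fourierInv_eq_fourier_neg,
    Real.fourier_real_eq_integral_exp_smul]
  congr 1; ext v
  rw [smul_eq_mul]
  push_cast
  ring_nf

section Support

variable (φ : SchwartzMap ℝ ℂ) (ϕ : ℝ → ℝ)

lemma offdiag (hφ_supp : ∀ ξ : ℝ, ft1 (⇑φ) ξ ≠ 0 → |ξ| ≤ 1 / 100)
    (hϕ_supp : ∀ x : ℝ, ϕ x ≠ 0 → |x| ≤ 1 / 10)
    (u : ℝ) {a b : ℤ} (hab : a ≠ b) :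
    ((ϕ (u - (a : ℝ)) : ℝ) : ℂ) * ft1 ⇑φ (u - (b : ℝ)) = 0 := by
  by_cases h0 : ft1 ⇑φ (u - (b : ℝ)) = 0
  · rw [h0, mul_zero]
  · have hub : |u - (b : ℝ)| ≤ 1 / 100 := hφ_supp _ h0
    have h1 : ϕ (u - (a : ℝ)) = 0 := by
      by_contra hne
      have h2 : |u - (a : ℝ)| ≤ 1 / 10 := hϕ_supp _ hne
      have h3 : (1 : ℝ) ≤ |(a : ℝ) - (b : ℝ)| := by
        have h4 : (1 : ℤ) ≤ |a - b| := Int.one_le_abs (sub_ne_zero.mpr hab)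
        have h5 : ((1:ℤ):ℝ) ≤ ((|a - b| : ℤ) : ℝ) := Int.cast_le.mpr h4
        rw [Int.cast_abs] at h5
        push_cast at h5
        exact_mod_cast h5
      have h6 : |(a : ℝ) - (b : ℝ)| ≤ |(a : ℝ) - u| + |u - (b : ℝ)| := abs_sub_le _ _ _
      rw [abs_sub_comm (a : ℝ) u] at h6
      linarith
    rw [h1, Complex.ofReal_zero, zero_mul]

lemma diag (hφ_supp : ∀ ξ : ℝ, ft1 (⇑φ) ξ ≠ 0 → |ξ| ≤ 1 / 100)
    (hϕ_one : ∀ x : ℝ, |x| ≤ 1 / 20 → ϕ x = 1) (u : ℝ) :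
    ((ϕ u : ℝ) : ℂ) * ft1 ⇑φ u = ft1 ⇑φ u := by
  by_cases h0 : ft1 ⇑φ u = 0
  · rw [h0, mul_zero]
  · have hub : |u| ≤ 1 / 100 := hφ_supp _ h0
    rw [hϕ_one u (by linarith), Complex.ofReal_one, one_mul]

end Support

/-- **Computation for Theorem `PL`.** With
`f(x) = N⁻¹ φ(x/N) Σ_{j=-N}^N e_j e^{2πijx/N}`, `g(x) = N⁻¹ φ(x/N) Σ_{j=-N}^N e^{2πijx/N}`
and `σ(ξ) = Σ_{j₁,…,j_m} d_{j₁+⋯+j_m} e_{j₁}⋯e_{j_k} ∏_i ϕ(Nξ_i - j_i)`, placing `f` in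
the first `k` slots and `g` in the remaining `m - k` slots, one has
`T_σ(f,…,f,g,…,g)(x) = N^{-m} φ(x/N)^m Σ_{j₁,…,j_m} d_{j₁+⋯+j_m} e^{2πi(j₁+⋯+j_m)x/N}`;
in particular the value is independent of `k`. -/
theorem Tsigma_eval_PL (m : ℕ) (hm : 1 ≤ m) (k : ℕ) (hk : k ≤ m)
    (φ : SchwartzMap ℝ ℂ)
    (hφ_supp : ∀ ξ : ℝ, ft1 (⇑φ) ξ ≠ 0 → |ξ| ≤ 1 / 100)
    (ϕ : ℝ → ℝ) (hϕ_smooth : ContDiff ℝ (⊤ : ℕ∞) ϕ)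
    (hϕ_supp : ∀ x : ℝ, ϕ x ≠ 0 → |x| ≤ 1 / 10)
    (hϕ_one : ∀ x : ℝ, |x| ≤ 1 / 20 → ϕ x = 1)
    (N : ℕ) (hN : 1 ≤ N)
    (e : ℤ → ℝ) (he : ∀ j, e j = 1 ∨ e j = -1) (d : ℤ → ℂ) :
    ∀ x : ℝ,
      TmulR
        (fun ξ : Fin m → ℝ =>
          ∑ j ∈ Fintype.piFinset (fun _ : Fin m => Finset.Icc (-(N : ℤ)) (N : ℤ)),
            d (∑ i, j i) * (∏ i : Fin m, if (i : ℕ) < k then ((e (j i) : ℝ) : ℂ) else 1) *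
              ∏ i : Fin m, ((ϕ ((N : ℝ) * ξ i - (j i : ℝ)) : ℝ) : ℂ))
        (fun i =>
          if (i : ℕ) < k then
            fun y : ℝ => ((N : ℝ) : ℂ)⁻¹ * φ (y / N) * ∑ j ∈ Finset.Icc (-(N : ℤ)) (N : ℤ),
              ((e j : ℝ) : ℂ) *
                Complex.exp ((2 * Real.pi * Complex.I) * (((j : ℝ) * y / N : ℝ) : ℂ))
          else
            fun y : ℝ => ((N : ℝ) : ℂ)⁻¹ * φ (y / N) * ∑ j ∈ Finset.Icc (-(N : ℤ)) (N : ℤ),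
              Complex.exp ((2 * Real.pi * Complex.I) * (((j : ℝ) * y / N : ℝ) : ℂ)))
        x =
      (((N : ℝ) ^ m : ℝ) : ℂ)⁻¹ * φ (x / N) ^ m *
        ∑ j ∈ Fintype.piFinset (fun _ : Fin m => Finset.Icc (-(N : ℤ)) (N : ℤ)),
          d (∑ i, j i) *
            Complex.exp ((2 * Real.pi * Complex.I) *
              ((((∑ i, j i : ℤ) : ℝ) * x / N : ℝ) : ℂ)) := by
  intro x
  have hN0 : (N : ℝ) ≠ 0 := by positivity
  have hNC : ((N : ℝ) : ℂ) ≠ 0 := by exact_mod_cast hN0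
  set I : Finset ℤ := Finset.Icc (-(N : ℤ)) (N : ℤ) with hI
  set P := Fintype.piFinset (fun _ : Fin m => I) with hP
  set Φ : ℝ → ℂ := ft1 ⇑φ with hΦdef
  set κ : Fin m → ℤ → ℂ := fun i a => if (i : ℕ) < k then ((e a : ℝ) : ℂ) else 1 with hκ
  -- the multiplier operator slot functions
  set F : Fin m → ℝ → ℂ := fun i =>
    if (i : ℕ) < k then
      fun y : ℝ => ((N : ℝ) : ℂ)⁻¹ * φ (y / N) * ∑ j ∈ I,
        ((e j : ℝ) : ℂ) * Complex.exp ((2 * Real.pi * Complex.I) * (((j : ℝ) * y / N : ℝ) : ℂ))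
    else
      fun y : ℝ => ((N : ℝ) : ℂ)⁻¹ * φ (y / N) * ∑ j ∈ I,
        Complex.exp ((2 * Real.pi * Complex.I) * (((j : ℝ) * y / N : ℝ) : ℂ)) with hF
  have hft : ∀ (i : Fin m) (t : ℝ),
      ft1 (F i) t = ∑ j ∈ I, κ i j * Φ ((N : ℝ) * t - (j : ℝ)) := by
    intro i t
    by_cases h : (i : ℕ) < k
    · simp only [hF, hκ, h, if_true]
      exact ft1_slot φ N hN (fun j => ((e j : ℝ) : ℂ)) I t
    · simp only [hF, hκ, h, if_false]
      have h2 := ft1_slot φ N hN (fun _ => (1 : ℂ)) I t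
      simpa only [one_mul] using h2
  -- the single-variable integrals
  have hΦint : Integrable Φ := ft1_integrable φ
  set h : ℤ → ℝ → ℂ := fun a t =>
    Φ ((N : ℝ) * t - (a : ℝ)) *
      Complex.exp ((2 * Real.pi * Complex.I) * ((t * x : ℝ) : ℂ)) with hh
  have hhint : ∀ a : ℤ, Integrable (h a) := by
    intro a
    have h1 : Integrable (fun t : ℝ => Φ ((N : ℝ) * t - (a : ℝ))) :=
      (hΦint.comp_sub_right ((a : ℤ) : ℝ)).comp_mul_left' hN0
    exact integrable_mul_exp' h1 (g := fun t => t * x) (continuous_id.mul continuous_const)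
  have hsingle : ∀ a : ℤ, ∫ t : ℝ, h a t
      = ((N : ℝ) : ℂ)⁻¹ *
        Complex.exp ((2 * Real.pi * Complex.I) * (((a : ℝ) * x / N : ℝ) : ℂ)) * φ (x / N) := by
    intro a
    set K : ℝ → ℂ := fun v =>
      Φ v * Complex.exp ((2 * Real.pi * Complex.I) * (((v + (a : ℝ)) / N * x : ℝ) : ℂ)) with hK
    have step1 : ∫ t : ℝ, h a t = ∫ t : ℝ, K ((N : ℝ) * t - (a : ℝ)) := by
      congr 1; ext t
      rw [hh, hK]
      simp only [sub_add_cancel, mul_div_cancel_left₀ t hN0]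
    have step2 : (∫ t : ℝ, K ((N : ℝ) * t - (a : ℝ))) = |(N : ℝ)⁻¹| • ∫ v : ℝ, K (v - (a : ℝ)) :=
      Measure.integral_comp_mul_left (fun v => K (v - (a : ℝ))) (N : ℝ)
    have step3 : (∫ v : ℝ, K (v - (a : ℝ))) = ∫ v : ℝ, K v :=
      integral_sub_right_eq_self K ((a : ℤ) : ℝ)
    have step4 : (∫ v : ℝ, K v)
        = (∫ v : ℝ, Φ v * Complex.exp ((2 * Real.pi * Complex.I) * ((v * (x / N) : ℝ) : ℂ))) *
          Complex.exp ((2 * Real.pi * Complex.I) * (((a : ℝ) * x / N : ℝ) : ℂ)) := by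
      rw [← MeasureTheory.integral_mul_const]
      congr 1; ext v
      simp only [hK, mul_assoc, ← Complex.exp_add]
      congr 2
      push_cast
      field_simp
    rw [step1, step2, step3, step4, hΦdef, ft1_inversion φ (x / N)]
    rw [abs_of_nonneg (by positivity : (0:ℝ) ≤ (N:ℝ)⁻¹), Complex.real_smul]
    push_cast
    ring
  -- pointwise identity for the integrand
  have hpoint : ∀ ξ : Fin m → ℝ,
      (∑ j ∈ P, d (∑ i, j i) * (∏ i : Fin m, κ i (j i)) *
          ∏ i : Fin m, ((ϕ ((N : ℝ) * ξ i - (j i : ℝ)) : ℝ) : ℂ)) *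
        (∏ i, ft1 (F i) (ξ i)) *
        Complex.exp ((2 * Real.pi * Complex.I) * (((∑ i, ξ i) * x : ℝ) : ℂ))
      = ∑ j ∈ P, d (∑ i, j i) * ∏ i : Fin m, h (j i) (ξ i) := by
    intro ξ
    have hexp : Complex.exp ((2 * Real.pi * Complex.I) * (((∑ i, ξ i) * x : ℝ) : ℂ))
        = ∏ i : Fin m, Complex.exp ((2 * Real.pi * Complex.I) * ((ξ i * x : ℝ) : ℂ)) := by
      rw [← Complex.exp_sum]
      congr 1
      rw [← Finset.mul_sum]
      congr 1
      push_cast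
      rw [Finset.sum_mul]
    have h1 : ∏ i, ft1 (F i) (ξ i) = ∏ i, ∑ j ∈ I, κ i j * Φ ((N : ℝ) * ξ i - (j : ℝ)) :=
      Finset.prod_congr rfl fun i _ => hft i (ξ i)
    rw [h1, Finset.prod_univ_sum, hexp, Finset.sum_mul_sum, Finset.sum_mul]
    refine Finset.sum_congr rfl fun j hj => ?_
    rw [Finset.sum_mul]
    rw [Finset.sum_eq_single_of_mem j hj ?offd]
    case offd =>
      intro J hJ hne
      obtain ⟨i₀, hi₀⟩ : ∃ i, J i ≠ j i := by
        by_contra hcon; push_neg at hcon; exact hne (funext hcon)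
      have hz : (∏ i : Fin m, ((ϕ ((N : ℝ) * ξ i - (j i : ℝ)) : ℝ) : ℂ)) *
          (∏ i : Fin m, (κ i (J i) * Φ ((N : ℝ) * ξ i - (J i : ℝ)))) = 0 := by
        rw [← Finset.prod_mul_distrib]
        apply Finset.prod_eq_zero (Finset.mem_univ i₀)
        rw [mul_left_comm]
        rw [offdiag φ ϕ hφ_supp hϕ_supp ((N : ℝ) * ξ i₀) (fun hcc => hi₀ hcc.symm)]
        · exact mul_zero _
      calc d (∑ i, j i) * (∏ i : Fin m, κ i (j i)) *
            (∏ i : Fin m, ((ϕ ((N : ℝ) * ξ i - (j i : ℝ)) : ℝ) : ℂ)) *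
            (∏ i : Fin m, (κ i (J i) * Φ ((N : ℝ) * ξ i - (J i : ℝ)))) *
            (∏ i : Fin m, Complex.exp ((2 * Real.pi * Complex.I) * ((ξ i * x : ℝ) : ℂ)))
          = d (∑ i, j i) * (∏ i : Fin m, κ i (j i)) *
            (∏ i : Fin m, Complex.exp ((2 * Real.pi * Complex.I) * ((ξ i * x : ℝ) : ℂ))) *
            ((∏ i : Fin m, ((ϕ ((N : ℝ) * ξ i - (j i : ℝ)) : ℝ) : ℂ)) *
             (∏ i : Fin m, (κ i (J i) * Φ ((N : ℝ) * ξ i - (J i : ℝ))))) := by ring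
        _ = 0 := by rw [hz, mul_zero]
    -- diagonal term
    have e1 : ∏ i : Fin m, (κ i (j i) * Φ ((N : ℝ) * ξ i - (j i : ℝ)))
        = (∏ i : Fin m, κ i (j i)) * ∏ i : Fin m, Φ ((N : ℝ) * ξ i - (j i : ℝ)) :=
      Finset.prod_mul_distrib
    have e2 : (∏ i : Fin m, κ i (j i)) * (∏ i : Fin m, κ i (j i)) = 1 := by
      rw [← Finset.prod_mul_distrib]
      apply Finset.prod_eq_one
      intro i _
      rw [hκ]
      by_cases hik : (i : ℕ) < k
      · simp only [hik, if_true]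
        rcases he (j i) with hh1 | hh1 <;> rw [hh1] <;> norm_num
      · simp only [hik, if_false, one_mul]
    have e3 : (∏ i : Fin m, ((ϕ ((N : ℝ) * ξ i - (j i : ℝ)) : ℝ) : ℂ)) *
        (∏ i : Fin m, Φ ((N : ℝ) * ξ i - (j i : ℝ)))
        = ∏ i : Fin m, Φ ((N : ℝ) * ξ i - (j i : ℝ)) := by
      rw [← Finset.prod_mul_distrib]
      exact Finset.prod_congr rfl fun i _ =>
        diag φ ϕ hφ_supp hϕ_one ((N : ℝ) * ξ i - (j i : ℝ))
    calc d (∑ i, j i) * (∏ i : Fin m, κ i (j i)) *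
          (∏ i : Fin m, ((ϕ ((N : ℝ) * ξ i - (j i : ℝ)) : ℝ) : ℂ)) *
          (∏ i : Fin m, (κ i (j i) * Φ ((N : ℝ) * ξ i - (j i : ℝ)))) *
          (∏ i : Fin m, Complex.exp ((2 * Real.pi * Complex.I) * ((ξ i * x : ℝ) : ℂ)))
        = d (∑ i, j i) * (((∏ i : Fin m, κ i (j i)) * (∏ i : Fin m, κ i (j i))) *
            (((∏ i : Fin m, ((ϕ ((N : ℝ) * ξ i - (j i : ℝ)) : ℝ) : ℂ)) *
              (∏ i : Fin m, Φ ((N : ℝ) * ξ i - (j i : ℝ)))) *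
             (∏ i : Fin m, Complex.exp ((2 * Real.pi * Complex.I) * ((ξ i * x : ℝ) : ℂ))))) := by
          rw [e1]; ring
      _ = d (∑ i, j i) * ∏ i : Fin m, h (j i) (ξ i) := by
          rw [e2, e3, one_mul, ← Finset.prod_mul_distrib]
  -- now compute the integral
  rw [TmulR]
  have hintgr : (∫ ξ : Fin m → ℝ,
      (∑ j ∈ P, d (∑ i, j i) * (∏ i : Fin m, κ i (j i)) *
          ∏ i : Fin m, ((ϕ ((N : ℝ) * ξ i - (j i : ℝ)) : ℝ) : ℂ)) *
        (∏ i, ft1 (F i) (ξ i)) *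
        Complex.exp ((2 * Real.pi * Complex.I) * (((∑ i, ξ i) * x : ℝ) : ℂ)))
      = ∫ ξ : Fin m → ℝ, ∑ j ∈ P, d (∑ i, j i) * ∏ i : Fin m, h (j i) (ξ i) :=
    integral_congr_ae (Filter.Eventually.of_forall hpoint)
  rw [hintgr]
  rw [integral_finset_sum (μ := volume) P (fun j _ =>
    (Integrable.fintype_prod (fun i => hhint (j i))).const_mul _)]
  have hterm : ∀ j : Fin m → ℤ,
      (∫ ξ : Fin m → ℝ, d (∑ i, j i) * ∏ i : Fin m, h (j i) (ξ i))
      = d (∑ i, j i) * ∏ i : Fin m, (((N : ℝ) : ℂ)⁻¹ *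
          Complex.exp ((2 * Real.pi * Complex.I) * (((j i : ℝ) * x / N : ℝ) : ℂ)) * φ (x / N)) := by
    intro j
    rw [MeasureTheory.integral_const_mul, MeasureTheory.volume_pi,
      MeasureTheory.integral_fintype_prod_eq_prod (fun i t => h (j i) t)]
    congr 1
    exact Finset.prod_congr rfl fun i _ => hsingle (j i)
  simp_rw [hterm]
  rw [Finset.mul_sum]
  refine Finset.sum_congr rfl fun j hj => ?_
  have eprod : ∏ i : Fin m,
      Complex.exp ((2 * Real.pi * Complex.I) * (((j i : ℝ) * x / N : ℝ) : ℂ))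
      = Complex.exp ((2 * Real.pi * Complex.I) * ((((∑ i, j i : ℤ) : ℝ) * x / N : ℝ) : ℂ)) := by
    rw [← Complex.exp_sum]
    congr 1
    rw [← Finset.mul_sum]
    congr 1
    push_cast
    rw [← Finset.sum_div, ← Finset.sum_mul]
  rw [Finset.prod_mul_distrib, Finset.prod_mul_distrib, Finset.prod_const, Finset.prod_const,
    eprod]
  have hpow : (((N : ℝ) ^ m : ℝ) : ℂ)⁻¹ = (((N : ℝ) : ℂ)⁻¹) ^ m := by
    push_cast
    rw [inv_pow]
  rw [hpow]
  simp only [Finset.card_univ, Fintype.card_fin]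
  ring

end
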